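/- A directed graph on a finite set has no directed cycle if and only if there is no nonempty subset X of its vertices such that every vertex in X has exactly one in-neighbor in X and exactly one out-neighbor in X. -/

import Mathlib

/-- `R` has a directed cycle: a nonempty sequence `v_0, …, v_k` (indices mod `k+1`)
with `R (v i) (v (i+1))` for all `i` (the successor taken cyclically in `Fin (k+1)`). -/
def HasDirectedCycle {V : Type*} (R : V → V → Prop) : Prop :=
  ∃ (k : ℕ) (v : Fin (k + 1) → V), ∀ i, R (v i) (v (i + 1))

theorem acyclic_iff_no_in_out_degree_one_subset {V : Type*} [Fintype V]
    (R : V → V → Prop) :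
    ¬ HasDirectedCycle R ↔
      ¬ ∃ X : Finset V, X.Nonempty ∧ ∀ x ∈ X,
        (∃! y, y ∈ X ∧ R y x) ∧ (∃! z, z ∈ X ∧ R x z) := by
  rw [not_iff_not]
  classical
  constructor
  · -- cycle → subset
    intro hcyc
    have hP : ∃ k : ℕ, ∃ v : Fin (k + 1) → V, ∀ i, R (v i) (v (i + 1)) := hcyc
    set k := Nat.find hP with hkdef
    obtain ⟨v, hv⟩ := Nat.find_spec hP
    -- chord lemma: all edges between cycle vertices are consecutive
    open Fin.NatCast Fin.CommRing in
    have chord : ∀ a b : Fin (k + 1), R (v a) (v b) → b = a + 1 := by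
      intro a b hab
      by_contra hne
      set m := (a - b).val with hm
      have hlast : (Fin.last k : Fin (k + 1)) = -1 := by
        have h0 : Fin.last k + 1 = 0 := Fin.last_add_one k
        linear_combination (norm := abel) h0
      have hmk : m < k := by
        have hle : m ≤ k := Nat.lt_succ_iff.mp (a - b).isLt
        rcases lt_or_eq_of_le hle with h | h
        · exact h
        · exfalso
          apply hne
          have hab' : a - b = -1 := by
            rw [← hlast]
            exact Fin.ext (by simpa using h)
          have := sub_sub_cancel a b
          rw [hab'] at this
          rw [← this]; ring
      apply Nat.find_min hP hmk
      refine ⟨fun j => v (b + ((j.val : ℕ) : Fin (k + 1))), fun j => ?_⟩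
      rcases eq_or_ne j (Fin.last m) with hj | hj
      · have hj1 : j + 1 = 0 := by rw [hj]; exact Fin.last_add_one m
        have hcast : ((j.val : ℕ) : Fin (k + 1)) = a - b := by
          apply Fin.ext
          rw [Fin.val_natCast, hj, Fin.val_last, Nat.mod_eq_of_lt (Nat.lt_succ_of_lt hmk)]
        have h1 : b + ((j.val : ℕ) : Fin (k + 1)) = a := by
          rw [hcast]; ring
        have h2 : b + (((j + 1).val : ℕ) : Fin (k + 1)) = b := by
          rw [hj1]; simp
        show R (v (b + ((j.val : ℕ) : Fin (k + 1)))) (v (b + (((j + 1).val : ℕ) : Fin (k + 1))))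
        rw [h1, h2]; exact hab
      · have hjlt : j.val < m := by
          rcases Nat.lt_succ_iff_lt_or_eq.mp j.isLt with h | h
          · exact h
          · exact absurd (Fin.ext h) hj
        have hj1 : (j + 1).val = j.val + 1 := Fin.val_add_one_of_lt (by
          rwa [Fin.lt_iff_val_lt_val, Fin.val_last])
        have h2 : b + (((j + 1).val : ℕ) : Fin (k + 1)) =
            b + ((j.val : ℕ) : Fin (k + 1)) + 1 := by
          rw [hj1]; push_cast; ring
        show R (v (b + ((j.val : ℕ) : Fin (k + 1)))) (v (b + (((j + 1).val : ℕ) : Fin (k + 1))))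
        rw [h2]
        exact hv _
    -- build X
    refine ⟨Finset.univ.image v, ⟨v 0, Finset.mem_image_of_mem v (Finset.mem_univ 0)⟩, ?_⟩
    intro x hx
    obtain ⟨i, -, rfl⟩ := Finset.mem_image.mp hx
    constructor
    · refine ⟨v (i - 1), ⟨Finset.mem_image_of_mem v (Finset.mem_univ _), ?_⟩, ?_⟩
      · have := hv (i - 1)
        rwa [sub_add_cancel] at this
      · rintro y ⟨hyX, hyR⟩
        obtain ⟨j, -, rfl⟩ := Finset.mem_image.mp hyX
        have := chord j i hyR
        have hji : j = i - 1 := eq_sub_of_add_eq this.symm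
        rw [hji]
    · refine ⟨v (i + 1), ⟨Finset.mem_image_of_mem v (Finset.mem_univ _), hv i⟩, ?_⟩
      rintro z ⟨hzX, hzR⟩
      obtain ⟨j, -, rfl⟩ := Finset.mem_image.mp hzX
      rw [chord i j hzR]
  · -- subset → cycle
    rintro ⟨X, ⟨x0, hx0⟩, hX⟩
    have hsucc : ∀ x ∈ X, ∃ z, z ∈ X ∧ R x z := by
      intro x hx
      obtain ⟨z, hz, -⟩ := (hX x hx).2
      exact ⟨z, hz⟩
    choose! g hgX hgR using fun x hx => hsucc x hx
    have hiter : ∀ n : ℕ, g^[n] x0 ∈ X := by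
      intro n
      induction n with
      | zero => simpa using hx0
      | succ n ih =>
        rw [Function.iterate_succ_apply']
        exact hgX _ ih
    obtain ⟨m, n, hmn, heq⟩ :=
      Finite.exists_ne_map_eq_of_infinite (fun n : ℕ => g^[n] x0)
    wlog hlt : m < n generalizing m n
    · exact this n m hmn.symm heq.symm (by omega)
    set y := g^[m] x0 with hy
    set p := n - m with hp
    have hp0 : 0 < p := by omega
    have hyp : g^[p] y = y := by
      rw [hy, ← Function.iterate_add_apply]
      have : p + m = n := by omega
      rw [this]
      exact heq.symm
    have hyX : ∀ j : ℕ, g^[j] y ∈ X := by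
      intro j
      rw [hy, ← Function.iterate_add_apply]
      exact hiter _
    obtain ⟨k, hk⟩ : ∃ k, p = k + 1 := ⟨p - 1, by omega⟩
    refine ⟨k, fun i => g^[i.val] y, fun i => ?_⟩
    have key : g^[(i + 1).val] y = g (g^[i.val] y) := by
      rcases eq_or_ne i (Fin.last k) with hi | hi
      · have hi1 : i + 1 = 0 := by rw [hi]; exact Fin.last_add_one k
        rw [hi1, hi]
        show g^[0] y = g (g^[k] y)
        rw [show g (g^[k] y) = g^[k + 1] y from (Function.iterate_succ_apply' g k y).symm,
          ← hk, hyp]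
        rfl
      · have hilt : i.val < k := by
          rcases Nat.lt_succ_iff_lt_or_eq.mp i.isLt with h | h
          · exact h
          · exact absurd (Fin.ext h) hi
        rw [Fin.val_add_one_of_lt (by rwa [Fin.lt_iff_val_lt_val, Fin.val_last]),
          Function.iterate_succ_apply']
    show R (g^[i.val] y) (g^[(i + 1).val] y)
    rw [key]
    exact hgR _ (hyX _)
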